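/- Let h be a function analytic in a neighborhood of the closed disk {|ξ| ≤ R} (R > 0) satisfying the integral equation h(ξ)² = 1 + d₁ ξ² + d₂ ξ + ∫₀^ξ (d₃ s + d₄) h(s) ds + 2λ ∫₀^ξ (h(s) - 1) s^{-1} ds, with h(0) = 1, where d₁,...,d₄, λ ∈ ℂ. Then there exist constants C₅, C₆ (depending only on d₁,...,d₄, λ) such that M_R := sup_{|ξ| ≤ R} |h(ξ)| ≤ C₅ R² + C₆. -/

import Mathlib

open Metric intervalIntegral

/-- The integrals `∫₀^ξ` along the segment from `0` to `ξ` are parametrized by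
`s = t·ξ`, `t ∈ [0,1]`, so `∫₀^ξ f(s) ds = ξ ∫₀¹ f(tξ) dt` and
`∫₀^ξ (h(s)-1)/s ds = ∫₀¹ (h(tξ)-1)/t dt`. -/
theorem stmt_6 (d₁ d₂ d₃ d₄ lam : ℂ) :
    ∃ C₅ C₆ : ℝ, ∀ R : ℝ, 0 < R → ∀ h : ℂ → ℂ,
      (∃ U : Set ℂ, IsOpen U ∧ Metric.closedBall (0:ℂ) R ⊆ U ∧ AnalyticOnNhd ℂ h U) →
      h 0 = 1 →
      (∀ ξ : ℂ, ‖ξ‖ ≤ R →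
        (h ξ) ^ 2 = 1 + d₁ * ξ ^ 2 + d₂ * ξ
          + ξ * ∫ t in (0:ℝ)..1, (d₃ * ((t : ℂ) * ξ) + d₄) * h ((t : ℂ) * ξ)
          + 2 * lam * ∫ t in (0:ℝ)..1, (h ((t : ℂ) * ξ) - 1) / (t : ℂ)) →
      ∀ ξ : ℂ, ‖ξ‖ ≤ R → ‖h ξ‖ ≤ C₅ * R ^ 2 + C₆ := by
  refine ⟨‖d₁‖ + ‖d₂‖ + ‖d₃‖ + ‖d₄‖ + 4 * ‖lam‖, 1 + ‖d₂‖ + ‖d₄‖ + 4 * ‖lam‖, ?_⟩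
  rintro R hR h ⟨U, hUopen, hsub, han⟩ h0 heq ξ hξ
  have hdiffU : DifferentiableOn ℂ h U := han.differentiableOn
  have hcont : ContinuousOn h (closedBall 0 R) := hdiffU.continuousOn.mono hsub
  obtain ⟨ξ₀, hξ₀mem, hmax⟩ := (isCompact_closedBall (0:ℂ) R).exists_isMaxOn
    ⟨0, mem_closedBall_self hR.le⟩ hcont.norm
  set M := ‖h ξ₀‖ with hMdef
  have hmax' : ∀ z ∈ closedBall (0:ℂ) R, ‖h z‖ ≤ M := fun z hz => hmax hz
  have hM1 : 1 ≤ M := by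
    have := hmax' 0 (mem_closedBall_self hR.le)
    simpa [h0] using this
  have hM0 : 0 ≤ M := by linarith
  -- bound on dslope h 0 via maximum modulus principle
  have h0U : (0:ℂ) ∈ U := hsub (mem_closedBall_self hR.le)
  have hUnhds : U ∈ nhds (0:ℂ) := hUopen.mem_nhds h0U
  have hg : DifferentiableOn ℂ (dslope h 0) U :=
    (Complex.differentiableOn_dslope hUnhds).mpr hdiffU
  have hgcl : DiffContOnCl ℂ (dslope h 0) (ball 0 R) := by
    apply DifferentiableOn.diffContOnCl
    rw [closure_ball (0:ℂ) hR.ne']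
    exact hg.mono hsub
  have hgbd : ∀ z ∈ closedBall (0:ℂ) R, ‖dslope h 0 z‖ ≤ (M + 1) / R := by
    intro z hz
    rw [← closure_ball (0:ℂ) hR.ne'] at hz
    refine Complex.norm_le_of_forall_mem_frontier_norm_le isBounded_ball hgcl ?_ hz
    intro w hw
    rw [frontier_ball (0:ℂ) hR.ne'] at hw
    have hwnorm : ‖w‖ = R := by simpa using hw
    have hwne : w ≠ 0 := by
      intro hw0; rw [hw0] at hwnorm; simp at hwnorm; exact hR.ne' hwnorm.symm
    rw [dslope_of_ne _ hwne, slope_def_field, h0, sub_zero, norm_div, hwnorm]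
    have hnum : ‖h w - 1‖ ≤ M + 1 := by
      have h1 : ‖h w‖ ≤ M :=
        hmax' w (by rw [mem_closedBall, dist_zero_right, hwnorm])
      have h2 : ‖h w - 1‖ ≤ ‖h w‖ + ‖(1:ℂ)‖ := norm_sub_le _ _
      rw [norm_one] at h2
      linarith
    gcongr
  -- pointwise bound on the singular integrand
  have key : ∀ ξ' : ℂ, ‖ξ'‖ ≤ R → ∀ t ∈ Set.uIoc (0:ℝ) 1,
      ‖(h ((t:ℂ) * ξ') - 1) / (t:ℂ)‖ ≤ M + 1 := by
    intro ξ' hξ' t ht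
    rw [Set.uIoc_of_le zero_le_one] at ht
    obtain ⟨ht0, ht1⟩ := ht
    by_cases hz : ξ' = 0
    · simp [hz, h0]; linarith
    have htne : (t:ℂ) ≠ 0 := by exact_mod_cast ne_of_gt ht0
    have htξ : (t:ℂ) * ξ' ≠ 0 := mul_ne_zero htne hz
    have hmem : (t:ℂ) * ξ' ∈ closedBall (0:ℂ) R := by
      rw [mem_closedBall, dist_zero_right, norm_mul, Complex.norm_real,
        Real.norm_eq_abs, abs_of_pos ht0]
      calc t * ‖ξ'‖ ≤ 1 * R := by
            apply mul_le_mul ht1 hξ' (norm_nonneg _) zero_le_one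
        _ = R := one_mul R
    have hds : dslope h 0 ((t:ℂ) * ξ') = (h ((t:ℂ) * ξ') - 1) / ((t:ℂ) * ξ') := by
      rw [dslope_of_ne _ htξ, slope_def_field, h0, sub_zero]
    have hrw : (h ((t:ℂ) * ξ') - 1) / (t:ℂ) = ξ' * dslope h 0 ((t:ℂ) * ξ') := by
      rw [hds]; field_simp
    rw [hrw, norm_mul]
    have hd := hgbd _ hmem
    calc ‖ξ'‖ * ‖dslope h 0 ((t:ℂ) * ξ')‖ ≤ R * ((M + 1) / R) := by
          apply mul_le_mul hξ' hd (norm_nonneg _) hR.le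
      _ = M + 1 := by field_simp
  -- bound on the singular integral
  have hint2 : ‖∫ t in (0:ℝ)..1, (h ((t:ℂ) * ξ₀) - 1) / (t:ℂ)‖ ≤ M + 1 := by
    have hξ₀ : ‖ξ₀‖ ≤ R := by simpa [mem_closedBall, dist_zero_right] using hξ₀mem
    have := intervalIntegral.norm_integral_le_of_norm_le_const (key ξ₀ hξ₀)
    simpa using this
  -- bound on the regular integral
  have hξ₀R : ‖ξ₀‖ ≤ R := by simpa [mem_closedBall, dist_zero_right] using hξ₀mem
  have hint1 : ‖∫ t in (0:ℝ)..1, ((d₃ * ((t:ℂ) * ξ₀) + d₄) * h ((t:ℂ) * ξ₀)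
      + 2 * lam * ∫ t in (0:ℝ)..1, (h ((t:ℂ) * ξ₀) - 1) / (t:ℂ))‖
      ≤ (‖d₃‖ * R + ‖d₄‖) * M + 2 * ‖lam‖ * (M + 1) := by
    have e4 : ‖2 * lam * ∫ t in (0:ℝ)..1, (h ((t:ℂ) * ξ₀) - 1) / (t:ℂ)‖
        ≤ 2 * ‖lam‖ * (M + 1) := by
      rw [norm_mul, norm_mul]
      have h2 : ‖(2:ℂ)‖ = 2 := by norm_num
      rw [h2]
      exact mul_le_mul_of_nonneg_left hint2 (by positivity : (0:ℝ) ≤ 2 * ‖lam‖)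
    have hb : ∀ t ∈ Set.uIoc (0:ℝ) 1,
        ‖(d₃ * ((t:ℂ) * ξ₀) + d₄) * h ((t:ℂ) * ξ₀)
          + 2 * lam * ∫ t in (0:ℝ)..1, (h ((t:ℂ) * ξ₀) - 1) / (t:ℂ)‖
          ≤ (‖d₃‖ * R + ‖d₄‖) * M + 2 * ‖lam‖ * (M + 1) := by
      intro t ht
      rw [Set.uIoc_of_le zero_le_one] at ht
      obtain ⟨ht0, ht1⟩ := ht
      have hmem : (t:ℂ) * ξ₀ ∈ closedBall (0:ℂ) R := by
        rw [mem_closedBall, dist_zero_right, norm_mul, Complex.norm_real,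
          Real.norm_eq_abs, abs_of_pos ht0]
        calc t * ‖ξ₀‖ ≤ 1 * R := by
              apply mul_le_mul ht1 hξ₀R (norm_nonneg _) zero_le_one
          _ = R := one_mul R
      have htnorm : ‖(t:ℂ) * ξ₀‖ ≤ R := by
        simpa [mem_closedBall, dist_zero_right] using hmem
      have hfirst : ‖(d₃ * ((t:ℂ) * ξ₀) + d₄) * h ((t:ℂ) * ξ₀)‖
          ≤ (‖d₃‖ * R + ‖d₄‖) * M := by
        rw [norm_mul]
        have h1 : ‖d₃ * ((t:ℂ) * ξ₀) + d₄‖ ≤ ‖d₃‖ * R + ‖d₄‖ := by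
          calc ‖d₃ * ((t:ℂ) * ξ₀) + d₄‖ ≤ ‖d₃ * ((t:ℂ) * ξ₀)‖ + ‖d₄‖ := norm_add_le _ _
            _ ≤ ‖d₃‖ * R + ‖d₄‖ := by
                rw [norm_mul]
                have := mul_le_mul_of_nonneg_left htnorm (norm_nonneg d₃)
                linarith
        have h2 : ‖h ((t:ℂ) * ξ₀)‖ ≤ M := hmax' _ hmem
        apply mul_le_mul h1 h2 (norm_nonneg _) (by positivity)
      exact (norm_add_le _ _).trans (add_le_add hfirst e4)
    have := intervalIntegral.norm_integral_le_of_norm_le_const hb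
    simpa using this
  -- quadratic inequality at the maximum point
  have hsq : M ^ 2 ≤ 1 + ‖d₁‖ * R ^ 2 + ‖d₂‖ * R
      + R * ((‖d₃‖ * R + ‖d₄‖) * M + 2 * ‖lam‖ * (M + 1)) := by
    have heq₀ := heq ξ₀ hξ₀R
    have : M ^ 2 = ‖(h ξ₀) ^ 2‖ := by rw [norm_pow]
    rw [this, heq₀]
    have e1 : ‖d₁ * ξ₀ ^ 2‖ ≤ ‖d₁‖ * R ^ 2 := by
      rw [norm_mul, norm_pow]
      have : ‖ξ₀‖ ^ 2 ≤ R ^ 2 := by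
        apply pow_le_pow_left₀ (norm_nonneg _) hξ₀R
      exact mul_le_mul_of_nonneg_left this (norm_nonneg _)
    have e2 : ‖d₂ * ξ₀‖ ≤ ‖d₂‖ * R := by
      rw [norm_mul]; exact mul_le_mul_of_nonneg_left hξ₀R (norm_nonneg _)
    have e3 : ‖ξ₀ * ∫ t in (0:ℝ)..1, ((d₃ * ((t:ℂ) * ξ₀) + d₄) * h ((t:ℂ) * ξ₀)
        + 2 * lam * ∫ t in (0:ℝ)..1, (h ((t:ℂ) * ξ₀) - 1) / (t:ℂ))‖
        ≤ R * ((‖d₃‖ * R + ‖d₄‖) * M + 2 * ‖lam‖ * (M + 1)) := by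
      rw [norm_mul]
      apply mul_le_mul hξ₀R hint1 (norm_nonneg _) hR.le
    refine (norm_add_le _ _).trans (add_le_add ?_ e3)
    refine (norm_add_le _ _).trans (add_le_add ?_ e2)
    refine (norm_add_le _ _).trans ?_
    rw [norm_one]
    linarith
  -- solve the quadratic inequality
  have hMle : M ≤ (1 + ‖d₁‖ * R ^ 2 + ‖d₂‖ * R + 2 * ‖lam‖ * R)
      + (R * (‖d₃‖ * R + ‖d₄‖) + 2 * ‖lam‖ * R) := by
    set A : ℝ := 1 + ‖d₁‖ * R ^ 2 + ‖d₂‖ * R + 2 * ‖lam‖ * R with hA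
    set B : ℝ := R * (‖d₃‖ * R + ‖d₄‖) + 2 * ‖lam‖ * R with hB
    have hA0 : 0 ≤ A := by positivity
    have hB0 : 0 ≤ B := by positivity
    have hsq' : M ^ 2 ≤ A + B * M := by rw [hA, hB]; ring_nf; ring_nf at hsq; linarith
    nlinarith [hsq', hM1, hA0, hB0, mul_nonneg hA0 (by linarith : (0:ℝ) ≤ M - 1)]
  have hfinal : M ≤ (‖d₁‖ + ‖d₂‖ + ‖d₃‖ + ‖d₄‖ + 4 * ‖lam‖) * R ^ 2
      + (1 + ‖d₂‖ + ‖d₄‖ + 4 * ‖lam‖) := by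
    have hRle : R ≤ R ^ 2 + 1 := by nlinarith [sq_nonneg (R - 1)]
    nlinarith [hMle, mul_le_mul_of_nonneg_left hRle (norm_nonneg d₂),
      mul_le_mul_of_nonneg_left hRle (norm_nonneg d₄),
      mul_le_mul_of_nonneg_left hRle (norm_nonneg lam),
      norm_nonneg d₁, norm_nonneg d₃, hR]
  exact le_trans (hmax' ξ (by rwa [mem_closedBall, dist_zero_right])) hfinal
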